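/- arXiv:2602.09127 — 3 statements merged into one kernel-verified Lean document; each statement's English description precedes it below -/
import Mathlib

section
/- Let Z be a random variable and T ∈ {0,1} with η(Z) := P(T=1 | Z) satisfying the log-odds model ln(η(Z)/(1−η(Z))) = ln(p/(1−p)) + ε·G almost surely, where E[G]=0, E[G²]=1, E[|G|³] < ∞, and p ∈ (0,1). Then the mutual information J = I(T;Z) in bits satisfies J = p(1−p)·ε² / (2 ln 2) + o(ε²) as ε → 0. -/
open MeasureTheory Asymptotics

/-- Binary Kullback–Leibler divergence in bits between `Bern(q)` and `Bern(p)`. -/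
noncomputable def klBern (q p : ℝ) : ℝ :=
  q * Real.logb 2 (q / p) + (1 - q) * Real.logb 2 ((1 - q) / (1 - p))

/-- The logistic (sigmoid) function. -/
noncomputable def logistic (x : ℝ) : ℝ := 1 / (1 + Real.exp (-x))

/-- log-partition function -/
noncomputable def Apart (y : ℝ) : ℝ := Real.log (1 + Real.exp y)

lemma one_add_exp_pos (y : ℝ) : 0 < 1 + Real.exp y := by positivity

lemma logistic_eq (x : ℝ) : logistic x = Real.exp x / (1 + Real.exp x) := by
  unfold logistic
  rw [div_eq_div_iff (by positivity) (by positivity)]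
  have : Real.exp x * Real.exp (-x) = 1 := by
    rw [← Real.exp_add]; simp
  ring_nf
  nlinarith [this]

lemma logistic_pos (x : ℝ) : 0 < logistic x := by
  unfold logistic; positivity

lemma logistic_lt_one (x : ℝ) : logistic x < 1 := by
  unfold logistic
  rw [div_lt_one (by positivity)]
  nlinarith [Real.exp_pos (-x)]

lemma one_sub_logistic (x : ℝ) : 1 - logistic x = 1 / (1 + Real.exp x) := by
  rw [logistic_eq]
  field_simp
  ring

lemma log_logistic (x : ℝ) : Real.log (logistic x) = x - Apart x := by
  rw [logistic_eq, Real.log_div (by positivity) (by positivity), Real.log_exp, Apart]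

lemma log_one_sub_logistic (x : ℝ) : Real.log (1 - logistic x) = -Apart x := by
  rw [one_sub_logistic, Real.log_div one_ne_zero (by positivity), Real.log_one, Apart]
  ring

lemma hasDerivAt_logistic (x : ℝ) :
    HasDerivAt logistic (logistic x * (1 - logistic x)) x := by
  have h1 : HasDerivAt (fun y : ℝ => 1 + Real.exp (-y)) (Real.exp (-x) * (-1)) x := by
    exact ((Real.hasDerivAt_exp (-x)).comp x ((hasDerivAt_id x).neg)).const_add 1
  have h2 := h1.inv (by positivity)
  have : logistic = fun y : ℝ => (1 + Real.exp (-y))⁻¹ := by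
    funext y; rw [logistic, one_div]
  rw [this]
  refine h2.congr_deriv ?_
  have he : (0:ℝ) < Real.exp (-x) := Real.exp_pos _
  field_simp
  ring

lemma hasDerivAt_Apart (x : ℝ) : HasDerivAt Apart (logistic x) x := by
  have h1 : HasDerivAt (fun y : ℝ => 1 + Real.exp y) (Real.exp x) x :=
    (Real.hasDerivAt_exp x).const_add 1
  have h2 := h1.log (by positivity)
  rw [show logistic x = Real.exp x / (1 + Real.exp x) from logistic_eq x]
  exact h2

/-- σ is 1-Lipschitz -/
lemma logistic_lipschitz (u v : ℝ) : |logistic u - logistic v| ≤ |u - v| := by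
  have := Convex.norm_image_sub_le_of_norm_hasDerivWithin_le
    (f := logistic) (f' := fun t => logistic t * (1 - logistic t)) (s := Set.univ) (C := 1)
    (fun t _ => (hasDerivAt_logistic t).hasDerivWithinAt)
    (fun t _ => by
      simp only [Real.norm_eq_abs]
      rw [abs_of_nonneg (by nlinarith [logistic_pos t, logistic_lt_one t])]
      nlinarith [logistic_pos t, logistic_lt_one t])
    convex_univ (Set.mem_univ v) (Set.mem_univ u)
  simpa [Real.norm_eq_abs] using this

lemma logistic_deriv_lipschitz (u v : ℝ) :
    |logistic u * (1 - logistic u) - logistic v * (1 - logistic v)| ≤ |u - v| := by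
  have key : logistic u * (1 - logistic u) - logistic v * (1 - logistic v)
      = (logistic u - logistic v) * (1 - logistic u - logistic v) := by ring
  rw [key, abs_mul]
  have h1 : |1 - logistic u - logistic v| ≤ 1 := by
    rw [abs_le]
    constructor <;> nlinarith [logistic_pos u, logistic_pos v, logistic_lt_one u, logistic_lt_one v]
  calc |logistic u - logistic v| * |1 - logistic u - logistic v|
      ≤ |u - v| * 1 := by
        exact mul_le_mul (logistic_lipschitz u v) h1 (abs_nonneg _) (abs_nonneg _)
    _ = |u - v| := mul_one _

/-- exponential-family identity for the binary KL divergence -/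
lemma klBern_logistic (p : ℝ) (hp0 : 0 < p) (hp1 : p < 1) (x : ℝ) :
    klBern (logistic (Real.log (p / (1 - p)) + x)) p
      = (x * logistic (Real.log (p / (1 - p)) + x)
          + Apart (Real.log (p / (1 - p))) - Apart (Real.log (p / (1 - p)) + x))
        / Real.log 2 := by
  set a := Real.log (p / (1 - p)) with ha
  have hpl : logistic a = p := by
    have h1p : (0:ℝ) < 1 - p := by linarith
    rw [logistic_eq, ha, Real.exp_log (by positivity)]
    field_simp
    ring
  have hlogp : Real.log p = a - Apart a := by rw [← hpl, log_logistic]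
  have hlog1p : Real.log (1 - p) = -Apart a := by rw [← hpl, log_one_sub_logistic]
  set q := logistic (a + x) with hq
  have hq0 : 0 < q := logistic_pos _
  have hq1 : q < 1 := logistic_lt_one _
  have hlq : Real.log q = a + x - Apart (a + x) := log_logistic _
  have hl1q : Real.log (1 - q) = -Apart (a + x) := log_one_sub_logistic _
  rw [klBern, Real.logb, Real.logb,
    Real.log_div (ne_of_gt hq0) (ne_of_gt hp0),
    Real.log_div (by linarith) (by linarith : (1:ℝ) - p ≠ 0)]
  rw [hlq, hl1q, hlogp, hlog1p]
  ring

noncomputable def gfun (a x : ℝ) : ℝ :=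
  x * logistic (a + x) + Apart a - Apart (a + x)

lemma hasDerivAt_gfun (a x : ℝ) :
    HasDerivAt (gfun a) (x * (logistic (a + x) * (1 - logistic (a + x)))) x := by
  have hL : HasDerivAt (fun y : ℝ => logistic (a + y))
      (logistic (a + x) * (1 - logistic (a + x))) x := by
    exact (hasDerivAt_logistic (a + x)).comp_const_add a x
  have hA : HasDerivAt (fun y : ℝ => Apart (a + y)) (logistic (a + x)) x := by
    exact (hasDerivAt_Apart (a + x)).comp_const_add a x
  have h1 : HasDerivAt (fun y : ℝ => y * logistic (a + y))
      (1 * logistic (a + x) + x * (logistic (a + x) * (1 - logistic (a + x)))) x :=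
    (hasDerivAt_id x).mul hL
  have := (h1.add_const (Apart a)).sub hA
  refine this.congr_deriv ?_
  ring

/-- global cubic Taylor bound -/
lemma gfun_taylor (a x : ℝ) :
    |gfun a x - logistic a * (1 - logistic a) * x ^ 2 / 2| ≤ |x| ^ 3 := by
  set c := logistic a * (1 - logistic a) with hc
  set h := fun y : ℝ => gfun a y - c * y ^ 2 / 2 with hh
  have hd : ∀ t : ℝ, HasDerivAt h
      (t * (logistic (a + t) * (1 - logistic (a + t)) - c)) t := by
    intro t
    have h1 : HasDerivAt (fun y : ℝ => c * y ^ 2 / 2) (c * t) t := by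
      have : HasDerivAt (fun y : ℝ => y ^ 2) (2 * t) t := by
        simpa using hasDerivAt_pow 2 t
      have h2 := (this.const_mul c).div_const 2
      refine h2.congr_deriv ?_
      ring
    have := (hasDerivAt_gfun a t).sub h1
    refine this.congr_deriv ?_
    ring
  have key := Convex.norm_image_sub_le_of_norm_hasDerivWithin_le
    (f := h) (f' := fun t => t * (logistic (a + t) * (1 - logistic (a + t)) - c))
    (s := Set.uIcc 0 x) (C := x ^ 2)
    (fun t _ => (hd t).hasDerivWithinAt)
    (fun t ht => by
      have htx : |t| ≤ |x| := by
        rcases Set.mem_uIcc.mp ht with ⟨h1, h2⟩ | ⟨h1, h2⟩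
        · rw [abs_of_nonneg h1]; exact le_trans h2 (le_abs_self x)
        · rw [abs_of_nonpos h2]; exact le_trans (neg_le_neg h1) (neg_le_abs x)
      have hlip : |logistic (a + t) * (1 - logistic (a + t)) - c| ≤ |t| := by
        have := logistic_deriv_lipschitz (a + t) a
        simpa [hc] using this
      rw [Real.norm_eq_abs, abs_mul]
      calc |t| * |logistic (a + t) * (1 - logistic (a + t)) - c|
          ≤ |x| * |t| := mul_le_mul htx hlip (abs_nonneg _) (abs_nonneg _)
        _ ≤ |x| * |x| := by
            exact mul_le_mul_of_nonneg_left htx (abs_nonneg _)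
        _ = x ^ 2 := by rw [← abs_mul, abs_mul_self]; ring)
    (convex_uIcc 0 x) (Set.left_mem_uIcc) (Set.right_mem_uIcc)
  have h0 : h 0 = 0 := by simp [hh, gfun]
  rw [h0, sub_zero, sub_zero, Real.norm_eq_abs, Real.norm_eq_abs] at key
  calc |h x| ≤ x ^ 2 * |x| := key
    _ = |x| ^ 3 := by rw [← sq_abs]; ring

/-- under the weak-screening log-odds model
`ln(η/(1−η)) = ln(p/(1−p)) + ε·G` (i.e. `η = σ(ln(p/(1−p)) + ε·G)`), with
`E[G]=0`, `E[G²]=1`, `E[|G|³]<∞`, the screening information in bits,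
`J(ε) = E[D(Bern(η) ∥ Bern(p))] = I(T;Z)`, satisfies
`J(ε) = p(1−p)·ε²/(2 ln 2) + o(ε²)` as `ε → 0`. -/
theorem weak_screening_information
    {Ω : Type*} [MeasurableSpace Ω] (μ : Measure Ω) [IsProbabilityMeasure μ]
    (p : ℝ) (hp0 : 0 < p) (hp1 : p < 1)
    (G : Ω → ℝ) (hmeas : Measurable G)
    (hmean : ∫ ω, G ω ∂μ = 0)
    (hvar : ∫ ω, (G ω) ^ 2 ∂μ = 1)
    (hthird : Integrable (fun ω => |G ω| ^ 3) μ)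
    (J : ℝ → ℝ)
    (hJ : J = fun ε => ∫ ω, klBern (logistic (Real.log (p / (1 - p)) + ε * G ω)) p ∂μ) :
    (fun ε : ℝ => J ε - p * (1 - p) * ε ^ 2 / (2 * Real.log 2))
      =o[nhds 0] (fun ε : ℝ => ε ^ 2) := by
  have hlog2 : 0 < Real.log 2 := Real.log_pos (by norm_num)
  set a := Real.log (p / (1 - p)) with ha
  have h1p : (0:ℝ) < 1 - p := by linarith
  have hpl : logistic a = p := by
    rw [logistic_eq, ha, Real.exp_log (by positivity)]
    field_simp
    ring
  -- rewrite J in terms of gfun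
  have hJ' : ∀ ε : ℝ, J ε = ∫ ω, gfun a (ε * G ω) / Real.log 2 ∂μ := by
    intro ε
    rw [hJ]
    show (∫ ω, klBern (logistic (a + ε * G ω)) p ∂μ) = _
    congr 1
    funext ω
    rw [klBern_logistic p hp0 hp1 (ε * G ω)]
    rfl
  -- continuity of gfun a
  have hgdiff : Differentiable ℝ (gfun a) := fun x => (hasDerivAt_gfun a x).differentiableAt
  have hgc : Continuous (gfun a) := hgdiff.continuous
  -- integrability of G^2
  have hG2 : Integrable (fun ω => (G ω) ^ 2) μ := by
    refine Integrable.mono' ((integrable_const 1).add hthird)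
      ((hmeas.pow_const 2).aestronglyMeasurable) ?_
    filter_upwards with ω
    simp only [Pi.add_apply]
    rw [Real.norm_eq_abs, abs_of_nonneg (sq_nonneg _)]
    have ht : (0:ℝ) ≤ |G ω| := abs_nonneg _
    have heq : (G ω) ^ 2 = |G ω| ^ 2 := (sq_abs _).symm
    rw [heq]
    nlinarith [mul_nonneg ht (sq_nonneg (|G ω| - 1)), sq_nonneg (|G ω| - 1)]
  -- key pointwise Taylor bound
  have hpt : ∀ (ε : ℝ) (ω : Ω),
      |gfun a (ε * G ω) / Real.log 2 - p * (1 - p) * ε ^ 2 * (G ω) ^ 2 / (2 * Real.log 2)|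
        ≤ |ε| ^ 3 * |G ω| ^ 3 / Real.log 2 := by
    intro ε ω
    have h1 := gfun_taylor a (ε * G ω)
    rw [hpl] at h1
    have h2 : gfun a (ε * G ω) / Real.log 2
        - p * (1 - p) * ε ^ 2 * (G ω) ^ 2 / (2 * Real.log 2)
        = (gfun a (ε * G ω) - p * (1 - p) * (ε * G ω) ^ 2 / 2) / Real.log 2 := by
      field_simp
    rw [h2, abs_div, abs_of_pos hlog2, div_le_div_iff_of_pos_right hlog2]
    calc |gfun a (ε * G ω) - p * (1 - p) * (ε * G ω) ^ 2 / 2| ≤ |ε * G ω| ^ 3 := h1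
      _ = |ε| ^ 3 * |G ω| ^ 3 := by rw [abs_mul, mul_pow]
  -- integrability of the integrand
  have hInt : ∀ ε : ℝ, Integrable (fun ω => gfun a (ε * G ω) / Real.log 2) μ := by
    intro ε
    refine Integrable.mono'
      (((hG2.const_mul (p * (1 - p) * ε ^ 2 / (2 * Real.log 2))).add
        (hthird.const_mul (|ε| ^ 3 / Real.log 2))))
      (((hgc.measurable.comp (hmeas.const_mul ε)).div_const _).aestronglyMeasurable) ?_
    filter_upwards with ω
    simp only [Pi.add_apply]
    rw [Real.norm_eq_abs]
    have h1 := hpt ε ω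
    set F := gfun a (ε * G ω) / Real.log 2 with hF
    set Q := p * (1 - p) * ε ^ 2 * (G ω) ^ 2 / (2 * Real.log 2) with hQ
    have h2 : |F| ≤ |F - Q| + |Q| := by
      calc |F| = |(F - Q) + Q| := by ring_nf
        _ ≤ |F - Q| + |Q| := abs_add_le _ _
    have h3 : |Q| = p * (1 - p) * ε ^ 2 / (2 * Real.log 2) * (G ω) ^ 2 := by
      rw [hQ, abs_of_nonneg (by positivity)]
      ring
    have h4 : |ε| ^ 3 * |G ω| ^ 3 / Real.log 2 = |ε| ^ 3 / Real.log 2 * |G ω| ^ 3 := by ring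
    linarith [h1, h2, h3.le, h3.ge]
  -- the quadratic term integrates to the claimed value
  have hquad : ∀ ε : ℝ,
      ∫ ω, p * (1 - p) * ε ^ 2 * (G ω) ^ 2 / (2 * Real.log 2) ∂μ
        = p * (1 - p) * ε ^ 2 / (2 * Real.log 2) := by
    intro ε
    have : (fun ω => p * (1 - p) * ε ^ 2 * (G ω) ^ 2 / (2 * Real.log 2))
        = fun ω => (p * (1 - p) * ε ^ 2 / (2 * Real.log 2)) * (G ω) ^ 2 := by
      funext ω; ring
    rw [this, integral_const_mul, hvar, mul_one]
  have hquadInt : ∀ ε : ℝ,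
      Integrable (fun ω => p * (1 - p) * ε ^ 2 * (G ω) ^ 2 / (2 * Real.log 2)) μ := by
    intro ε
    have : (fun ω => p * (1 - p) * ε ^ 2 * (G ω) ^ 2 / (2 * Real.log 2))
        = fun ω => (p * (1 - p) * ε ^ 2 / (2 * Real.log 2)) * (G ω) ^ 2 := by
      funext ω; ring
    rw [this]
    exact hG2.const_mul _
  -- main bound
  have hbound : ∀ ε : ℝ,
      ‖J ε - p * (1 - p) * ε ^ 2 / (2 * Real.log 2)‖
        ≤ ((∫ ω, |G ω| ^ 3 ∂μ) / Real.log 2) * ‖ε ^ 3‖ := by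
    intro ε
    rw [hJ' ε, ← hquad ε, ← integral_sub (hInt ε) (hquadInt ε)]
    calc ‖∫ ω, (gfun a (ε * G ω) / Real.log 2
            - p * (1 - p) * ε ^ 2 * (G ω) ^ 2 / (2 * Real.log 2)) ∂μ‖
        ≤ ∫ ω, ‖gfun a (ε * G ω) / Real.log 2
            - p * (1 - p) * ε ^ 2 * (G ω) ^ 2 / (2 * Real.log 2)‖ ∂μ :=
          norm_integral_le_integral_norm _
      _ ≤ ∫ ω, |ε| ^ 3 * |G ω| ^ 3 / Real.log 2 ∂μ := by
          refine integral_mono ((hInt ε).sub (hquadInt ε)).norm ?_ ?_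
          · have : (fun ω => |ε| ^ 3 * |G ω| ^ 3 / Real.log 2)
                = fun ω => (|ε| ^ 3 / Real.log 2) * |G ω| ^ 3 := by
              funext ω; ring
            rw [this]; exact hthird.const_mul _
          · intro ω
            simp only [Real.norm_eq_abs]
            exact hpt ε ω
      _ = ((∫ ω, |G ω| ^ 3 ∂μ) / Real.log 2) * ‖ε ^ 3‖ := by
          have : (fun ω => |ε| ^ 3 * |G ω| ^ 3 / Real.log 2)
              = fun ω => (|ε| ^ 3 / Real.log 2) * |G ω| ^ 3 := by
            funext ω; ring
          rw [this, integral_const_mul, Real.norm_eq_abs, abs_pow]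
          ring
  refine IsBigO.trans_isLittleO ?_ (isLittleO_pow_pow (by norm_num : 2 < 3))
  rw [Asymptotics.isBigO_iff]
  exact ⟨(∫ ω, |G ω| ^ 3 ∂μ) / Real.log 2, Filter.Eventually.of_forall hbound⟩
end

section
/- In the benchmark haystack model, for any verification policy selecting a set 𝓑 ⊆ {1,…,K} with |𝓑| = B as a function of Z₁,…,Z_K (and independent randomness), E[Σ_{i∈𝓑} Tᵢ] ≤ E[Σ_{ℓ=1}^B η₍ℓ₎], where ηᵢ = P(Tᵢ = 1 | Zᵢ) and η₍₁₎ ≥ … ≥ η₍K₎ are the order statistics; equality holds for the top-B policy. -/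
open MeasureTheory ProbabilityTheory

/-- The sum of the `B` largest entries of a list of reals. -/
noncomputable def topSum (B : ℕ) (l : List ℝ) : ℝ :=
  ((l.insertionSort (· ≥ ·)).take B).sum

private lemma sum_le_take_of_sorted :
    ∀ (l : List ℝ), l.Pairwise (· ≥ ·) → ∀ (B : ℕ) (m : Multiset ℝ),
      m ≤ (l : Multiset ℝ) → Multiset.card m = B → m.sum ≤ (l.take B).sum
  | [], _, B, m, hm, _ => by
      have h0 : m = 0 := Multiset.le_zero.mp (by simpa using hm)
      simp [h0]
  | a :: t, hl, B, m, hm, hc => by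
      obtain ⟨ha, ht⟩ := List.pairwise_cons.mp hl
      cases B with
      | zero =>
        have h0 : m = 0 := Multiset.card_eq_zero.mp hc
        simp [h0]
      | succ B =>
        have hcons : ((a :: t : List ℝ) : Multiset ℝ) = a ::ₘ (t : Multiset ℝ) := by
          simp
        by_cases hmem : a ∈ m
        · have h1 : m.erase a ≤ (t : Multiset ℝ) := by
            have h2 := Multiset.erase_le_erase a hm
            rwa [hcons, Multiset.erase_cons_head] at h2
          have h2 : Multiset.card (m.erase a) = B := by
            rw [Multiset.card_erase_of_mem hmem, hc]; rfl
          have IH := sum_le_take_of_sorted t ht B (m.erase a) h1 h2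
          have hsum : m.sum = a + (m.erase a).sum := by
            conv_lhs => rw [← Multiset.cons_erase hmem]
            simp
          rw [hsum, List.take_succ_cons, List.sum_cons]
          linarith
        · rw [hcons] at hm
          have h1 : m ≤ (t : Multiset ℝ) := (Multiset.le_cons_of_notMem hmem).mp hm
          have hlen : B + 1 ≤ t.length := by
            have h2 := Multiset.card_le_card h1
            simpa [hc] using h2
          have IH := sum_le_take_of_sorted t ht (B + 1) m h1 hc
          have hBlt : B < t.length := hlen
          have hts : t.take (B + 1) = t.take B ++ [t.get ⟨B, hBlt⟩] := by
            rw [List.take_succ]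
            simp [List.getElem?_eq_getElem hBlt]
          have hmem' : t.get ⟨B, hBlt⟩ ∈ t := List.get_mem t ⟨B, hBlt⟩
          have hge := ha _ hmem'
          rw [List.take_succ_cons, List.sum_cons]
          rw [hts, List.sum_append, List.sum_cons, List.sum_nil] at IH
          linarith

/-- any size-`B` subset sum is at most `topSum`. -/
private lemma sum_le_topSum {K : ℕ} (B : ℕ) (v : Fin K → ℝ) (s : Finset (Fin K))
    (hs : s.card = B) : ∑ i ∈ s, v i ≤ topSum B (List.ofFn v) := by
  classical
  set l := (List.ofFn v).insertionSort (· ≥ ·) with hl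
  have hsorted : l.Pairwise (· ≥ ·) := List.pairwise_insertionSort _ _
  have hperm : List.Perm l (List.ofFn v) := List.perm_insertionSort _ _
  have hm : (s.val.map v) ≤ (↑l : Multiset ℝ) := by
    have h1 : (↑l : Multiset ℝ) = (↑(List.ofFn v) : Multiset ℝ) :=
      Quot.sound hperm
    rw [h1, List.ofFn_eq_map]
    have h2 : (((List.finRange K).map v : List ℝ) : Multiset ℝ)
        = (Finset.univ.val.map v) := by
      simp [Finset.univ, Fintype.elems]
    rw [h2]
    exact Multiset.map_le_map (by simpa using s.subset_univ)
  have hc : Multiset.card (s.val.map v) = B := by simp [hs]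
  have h3 := sum_le_take_of_sorted l hsorted B _ hm hc
  calc ∑ i ∈ s, v i = (s.val.map v).sum := rfl
    _ ≤ (l.take B).sum := h3
    _ = topSum B (List.ofFn v) := by unfold topSum; rw [← hl]

/-- deterministic top-`B` index selection. -/
noncomputable def topSel (K B : ℕ) (v : Fin K → ℝ) : Finset (Fin K) :=
  (((List.finRange K).insertionSort (fun i j => v i ≥ v j)).take B).toFinset

/-- the same selection as a function of the boolean comparison pattern. -/
def topSelPat (K B : ℕ) (p : Fin K → Fin K → Bool) : Finset (Fin K) :=
  (((List.finRange K).insertionSort (fun i j => p i j = true)).take B).toFinset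

private lemma insertionSort_congr {α : Type*} (r r' : α → α → Prop)
    [DecidableRel r] [DecidableRel r'] (h : r = r') (l : List α) :
    l.insertionSort r = l.insertionSort r' := by
  subst h
  congr!

private lemma topSel_eq_pat (K B : ℕ) (v : Fin K → ℝ) :
    topSel K B v = topSelPat K B (fun i j => decide (v i ≥ v j)) := by
  unfold topSel topSelPat
  rw [insertionSort_congr _ (fun i j => decide (v i ≥ v j) = true)
    (by funext i j; simp)]

private lemma topSel_nodup (K B : ℕ) (v : Fin K → ℝ) :
    (((List.finRange K).insertionSort (fun i j => v i ≥ v j)).take B).Nodup := by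
  have hperm := List.perm_insertionSort (fun i j : Fin K => v i ≥ v j) (List.finRange K)
  exact ((hperm.nodup_iff).mpr (List.nodup_finRange K)).sublist (List.take_sublist _ _)

private lemma topSel_card (K B : ℕ) (hB : B ≤ K) (v : Fin K → ℝ) :
    (topSel K B v).card = B := by
  have hperm := List.perm_insertionSort (fun i j : Fin K => v i ≥ v j) (List.finRange K)
  rw [topSel, List.card_toFinset, (topSel_nodup K B v).dedup,
    List.length_take, hperm.length_eq, List.length_finRange]
  exact Nat.min_eq_left hB

private lemma topSel_sum (K B : ℕ) (v : Fin K → ℝ) :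
    ∑ i ∈ topSel K B v, v i = topSum B (List.ofFn v) := by
  classical
  set r : Fin K → Fin K → Prop := fun i j => v i ≥ v j with hr
  letI : IsTotal (Fin K) r := ⟨fun a b => le_total (v b) (v a)⟩
  letI : IsTrans (Fin K) r := ⟨fun a b c h1 h2 => le_trans h2 h1⟩
  set L := (List.finRange K).insertionSort r with hL
  have hperm : List.Perm L (List.finRange K) := List.perm_insertionSort r _
  have hsorted : L.Pairwise r := List.pairwise_insertionSort r _
  have hmap_sorted : (L.map v).Pairwise (· ≥ ·) := List.Pairwise.map v (fun a b h => h) hsorted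
  have key : L.map v = (List.ofFn v).insertionSort (· ≥ ·) := by
    refine List.Perm.eq_of_pairwise' hmap_sorted (List.pairwise_insertionSort _ _) ?_
    refine ((hperm.map v).trans ?_).trans (List.perm_insertionSort _ _).symm
    rw [List.ofFn_eq_map]
  have hnd : (L.take B).Nodup := topSel_nodup K B v
  rw [topSel, ← hL]
  rw [List.sum_toFinset _ hnd, List.map_take, key]
  rfl

private lemma measurable_pat {K : ℕ} :
    Measurable (fun (v : Fin K → ℝ) (i : Fin K) (j : Fin K) => decide (v i ≥ v j)) := by
  refine measurable_pi_lambda _ fun i => measurable_pi_lambda _ fun j => ?_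
  have h : (fun v : Fin K → ℝ => decide (v i ≥ v j))
      = fun v => if v j ≤ v i then true else false := by
    funext v
    by_cases h : v j ≤ v i <;> simp [h, ge_iff_le]
  rw [h]
  exact Measurable.ite (measurableSet_le (measurable_pi_apply j) (measurable_pi_apply i))
    measurable_const measurable_const

private lemma topSel_measurableSet {K B : ℕ} (s : Finset (Fin K)) :
    MeasurableSet {v : Fin K → ℝ | topSel K B v = s} := by
  have h : {v : Fin K → ℝ | topSel K B v = s}
      = (fun (v : Fin K → ℝ) (i : Fin K) (j : Fin K) => decide (v i ≥ v j)) ⁻¹'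
        {p | topSelPat K B p = s} := by
    ext v
    simp [topSel_eq_pat]
  rw [h]
  exact measurable_pat (Set.to_countable _).measurableSet

/-- in the benchmark haystack model, any verification policy `𝓑`
selecting a size-`B` index set as a function of the screening statistics satisfies
`E[Σ_{i∈𝓑} Tᵢ] ≤ E[Σ_{ℓ≤B} η₍ℓ₎]`, where `ηᵢ = P(Tᵢ=1 | Zᵢ) = η(Zᵢ)`;
equality holds for the top-`B` policy. -/
theorem optimal_hit_rate
    {Ω : Type*} [m0 : MeasurableSpace Ω] (μ : Measure Ω) [IsProbabilityMeasure μ]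
    (K B : ℕ) (hB : B ≤ K)
    (T Z : Fin K → Ω → ℝ)
    (hTmeas : ∀ i, Measurable (T i)) (hZmeas : ∀ i, Measurable (Z i))
    (hT01 : ∀ i ω, T i ω = 0 ∨ T i ω = 1)
    (η : ℝ → ℝ) (hη : Measurable η)
    -- the σ-algebra generated by the screening statistics Z₁,…,Z_K
    (mZ : MeasurableSpace Ω)
    (hmZ : mZ = MeasurableSpace.comap (fun ω (i : Fin K) => Z i ω) inferInstance)
    (hle : mZ ≤ m0)
    -- conditional independence of the types given Z^K with E[Tᵢ | Z^K] = η(Zᵢ)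
    (hcond : ∀ i, μ[T i | mZ] =ᵐ[μ] fun ω => η (Z i ω))
    -- the verification policy: a size-B subset chosen measurably from Z^K
    (𝓑 : Ω → Finset (Fin K))
    (hcard : ∀ ω, (𝓑 ω).card = B)
    (hpol : ∀ s : Finset (Fin K), MeasurableSet[mZ] (𝓑 ⁻¹' {s})) :
    (∫ ω, ∑ i ∈ 𝓑 ω, T i ω ∂μ) ≤
      (∫ ω, topSum B (List.ofFn fun i : Fin K => η (Z i ω)) ∂μ) ∧
    ∃ 𝓑' : Ω → Finset (Fin K),
      (∀ ω, (𝓑' ω).card = B) ∧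
      (∀ s : Finset (Fin K), MeasurableSet[mZ] (𝓑' ⁻¹' {s})) ∧
      (∫ ω, ∑ i ∈ 𝓑' ω, T i ω ∂μ) =
        (∫ ω, topSum B (List.ofFn fun i : Fin K => η (Z i ω)) ∂μ) := by
  classical
  letI : MeasurableSpace Ω := m0
  have hTint : ∀ i, Integrable (T i) μ := fun i =>
    Integrable.mono' (integrable_const 1) (hTmeas i).aestronglyMeasurable
      (Filter.Eventually.of_forall fun ω => by
        rcases hT01 i ω with h | h <;> simp [h])
  have hηint : ∀ i, Integrable (fun ω => η (Z i ω)) μ := fun i =>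
    (integrable_condExp).congr (hcond i)
  -- key identity for any mZ-measurable policy
  have key : ∀ (𝓒 : Ω → Finset (Fin K)),
      (∀ s : Finset (Fin K), MeasurableSet[mZ] (𝓒 ⁻¹' {s})) →
      ((∫ ω, ∑ i ∈ 𝓒 ω, T i ω ∂μ) = (∫ ω, ∑ i ∈ 𝓒 ω, η (Z i ω) ∂μ)
        ∧ Integrable (fun ω => ∑ i ∈ 𝓒 ω, η (Z i ω)) μ) := by
    intro 𝓒 hpol'
    have hA : ∀ i : Fin K, MeasurableSet[mZ] {ω | i ∈ 𝓒 ω} := by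
      intro i
      have h : {ω | i ∈ 𝓒 ω} = ⋃ (t : Finset (Fin K)) (_ : i ∈ t), 𝓒 ⁻¹' {t} := by
        ext ω; simp
      rw [h]
      exact MeasurableSet.iUnion fun t => MeasurableSet.iUnion fun _ => hpol' t
    have hrw : ∀ (f : Fin K → Ω → ℝ) (ω : Ω),
        ∑ i ∈ 𝓒 ω, f i ω = ∑ i : Fin K, ({ω | i ∈ 𝓒 ω}).indicator (f i) ω := by
      intro f ω
      simp only [Set.indicator_apply, Set.mem_setOf_eq]
      rw [Finset.sum_ite_mem, Finset.univ_inter]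
    have hAm0 : ∀ i : Fin K, MeasurableSet[m0] {ω | i ∈ 𝓒 ω} := fun i => hle _ (hA i)
    have hindT : ∀ i : Fin K, Integrable (({ω | i ∈ 𝓒 ω}).indicator (T i)) μ :=
      fun i => (hTint i).indicator (hAm0 i)
    have hindη : ∀ i : Fin K,
        Integrable (({ω | i ∈ 𝓒 ω}).indicator (fun ω => η (Z i ω))) μ :=
      fun i => (hηint i).indicator (hAm0 i)
    have hi : ∀ i : Fin K, (∫ ω, ({ω | i ∈ 𝓒 ω}).indicator (T i) ω ∂μ)
        = ∫ ω, ({ω | i ∈ 𝓒 ω}).indicator (fun ω => η (Z i ω)) ω ∂μ := by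
      intro i
      rw [integral_indicator (hAm0 i), integral_indicator (hAm0 i),
        ← setIntegral_condExp hle (hTint i) (hA i)]
      exact integral_congr_ae (ae_restrict_of_ae (hcond i))
    have e1 : (fun ω => ∑ i ∈ 𝓒 ω, T i ω)
        = fun ω => ∑ i : Fin K, ({ω | i ∈ 𝓒 ω}).indicator (T i) ω := funext (hrw T)
    have e2 : (fun ω => ∑ i ∈ 𝓒 ω, η (Z i ω))
        = fun ω => ∑ i : Fin K, ({ω | i ∈ 𝓒 ω}).indicator (fun ω => η (Z i ω)) ω :=
      funext (hrw fun i ω => η (Z i ω))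
    constructor
    · rw [e1, e2, integral_finset_sum _ (fun i _ => hindT i),
        integral_finset_sum _ (fun i _ => hindη i)]
      exact Finset.sum_congr rfl fun i _ => hi i
    · rw [e2]
      exact integrable_finset_sum _ fun i _ => hindη i
  -- the top-B policy
  set 𝓑' : Ω → Finset (Fin K) := fun ω => topSel K B (fun i => η (Z i ω)) with h𝓑'
  have hpolB' : ∀ s : Finset (Fin K), MeasurableSet[mZ] (𝓑' ⁻¹' {s}) := by
    intro s
    rw [hmZ]
    rw [MeasurableSpace.measurableSet_comap]
    refine ⟨(fun (x : Fin K → ℝ) (i : Fin K) => η (x i)) ⁻¹' {v | topSel K B v = s},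
      ?_, ?_⟩
    · exact (measurable_pi_lambda _ fun i => hη.comp (measurable_pi_apply i))
        (topSel_measurableSet s)
    · rfl
  have hsum' : ∀ ω, ∑ i ∈ 𝓑' ω, η (Z i ω)
      = topSum B (List.ofFn fun i : Fin K => η (Z i ω)) := fun ω => topSel_sum K B _
  have etop : (fun ω => ∑ i ∈ 𝓑' ω, η (Z i ω))
      = fun ω => topSum B (List.ofFn fun i : Fin K => η (Z i ω)) := funext hsum'
  obtain ⟨eq1, int1⟩ := key 𝓑 hpol
  obtain ⟨eq2, int2⟩ := key 𝓑' hpolB'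
  constructor
  · rw [eq1, ← etop]
    refine integral_mono int1 int2 fun ω => ?_
    rw [hsum' ω]
    exact sum_le_topSum B _ _ (hcard ω)
  · exact ⟨𝓑', fun ω => topSel_card K B hB _, hpolB', by rw [eq2, ← etop]⟩
end

section
/- Let η₁, η₂, … be i.i.d. samples of a random variable η with continuous distribution and values in [0,1], and let Q be its quantile function. Fix α ∈ (0,1), set B = ⌊αK⌋, and let η₍₁₎ ≥ … ≥ η₍K₎ be the order statistics. Then (1/K)·Σ_{ℓ=1}^{B} η₍ℓ₎ → ∫_{1−α}^{1} Q(u) du almost surely (hence in probability) as K → ∞. -/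
set_option linter.unusedSectionVars false
set_option maxHeartbeats 1000000

open MeasureTheory ProbabilityTheory Filter Set

lemma posPart_le (a s t : ℝ) : max (a - s) 0 ≤ max (a - t) 0 + |s - t| :=
  max_le (by have h := neg_abs_le (s - t); have h2 := le_max_left (a - t) 0; linarith)
    (by have := abs_nonneg (s - t); have h2 := le_max_right (a - t) 0; linarith)

lemma abs_posPart_sub (a s t : ℝ) : |max (a - s) 0 - max (a - t) 0| ≤ |s - t| := by
  rw [abs_sub_le_iff]
  refine ⟨by have := posPart_le a s t; linarith, ?_⟩
  have := posPart_le a t s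
  rw [abs_sub_comm] at this; linarith

lemma list_abs_sum_sub (l : List ℝ) (s t : ℝ) :
    |(l.map (fun x => max (x - s) 0)).sum - (l.map (fun x => max (x - t) 0)).sum|
      ≤ l.length * |s - t| := by
  induction l with
  | nil => simp
  | cons a l ih =>
      simp only [List.map_cons, List.sum_cons, List.length_cons]
      have h := abs_posPart_sub a s t
      calc |(max (a-s) 0 + (l.map (fun x => max (x - s) 0)).sum)
              - (max (a-t) 0 + (l.map (fun x => max (x - t) 0)).sum)|
          ≤ |max (a-s) 0 - max (a-t) 0| +
            |(l.map (fun x => max (x - s) 0)).sum - (l.map (fun x => max (x - t) 0)).sum| := by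
            rw [add_sub_add_comm]; exact abs_add_le _ _
        _ ≤ |s - t| + l.length * |s - t| := add_le_add h ih
        _ = ((l.length + 1 : ℕ)) * |s - t| := by push_cast; ring


lemma list_sum_map_add (l : List ℝ) (f g : ℝ → ℝ) :
    (l.map (fun x => f x + g x)).sum = (l.map f).sum + (l.map g).sum := by
  induction l with
  | nil => simp
  | cons a l ih => simp [ih]; ring

lemma list_sum_nonneg (l : List ℝ) (f : ℝ → ℝ) (hf : ∀ x, 0 ≤ f x) : 0 ≤ (l.map f).sum :=
  List.sum_nonneg (fun x hx => by
    obtain ⟨y, _, rfl⟩ := List.mem_map.1 hx; exact hf y)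

lemma list_sum_map_const (l : List ℝ) (c : ℝ) : (l.map (fun _ => c)).sum = l.length * c := by
  induction l with
  | nil => simp
  | cons a l ih => simp [ih]; ring

lemma topSum_le (B : ℕ) (l : List ℝ) (t : ℝ) (ht : 0 ≤ t) :
    topSum B l ≤ (B : ℝ) * t + (l.map (fun x => max (x - t) 0)).sum := by
  set s := l.insertionSort (· ≥ ·) with hs
  have hperm : List.Perm s l := l.perm_insertionSort (· ≥ ·)
  have h1 : (s.take B).sum ≤ ((s.take B).map (fun x => t + max (x - t) 0)).sum := by
    have he : (s.take B).sum = ((s.take B).map id).sum := by simp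
    rw [he]
    exact List.sum_le_sum (fun x _ => by
      simp only [id]
      have := le_max_left (x - t) 0
      linarith)
  have h2 : ((s.take B).map (fun x => t + max (x - t) 0)).sum
      = ((s.take B).length : ℝ) * t + ((s.take B).map (fun x => max (x - t) 0)).sum := by
    rw [list_sum_map_add]
    simp [mul_comm]
  have h3 : ((s.take B).length : ℝ) * t ≤ (B : ℝ) * t := by
    apply mul_le_mul_of_nonneg_right _ ht
    exact_mod_cast List.length_take_le B s
  have h4 : ((s.take B).map (fun x => max (x - t) 0)).sum
      ≤ (l.map (fun x => max (x - t) 0)).sum := by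
    rw [← (hperm.map (fun x => max (x - t) 0)).sum_eq]
    conv_rhs => rw [← List.take_append_drop B s]
    rw [List.map_append, List.sum_append]
    have := list_sum_nonneg (s.drop B) (fun x => max (x - t) 0) (fun x => le_max_right _ _)
    linarith
  calc topSum B l = (s.take B).sum := rfl
    _ ≤ _ := h1
    _ = _ := h2
    _ ≤ (B : ℝ) * t + (l.map (fun x => max (x - t) 0)).sum := add_le_add h3 h4

lemma exists_topSum_ge (B : ℕ) (l : List ℝ) (hB : B ≤ l.length)
    (hl : ∀ x ∈ l, x ∈ Set.Icc (0:ℝ) 1) :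
    ∃ t ∈ Set.Icc (0:ℝ) 1,
      (B : ℝ) * t + (l.map (fun x => max (x - t) 0)).sum ≤ topSum B l := by
  rcases Nat.eq_zero_or_pos B with rfl | hBpos
  · refine ⟨1, by norm_num, ?_⟩
    have : (l.map (fun x => max (x - 1) 0)).sum = 0 := by
      apply List.sum_eq_zero
      intro x hx
      obtain ⟨y, hy, rfl⟩ := List.mem_map.1 hx
      have := (hl y hy).2
      simp [max_eq_right]; linarith
    simp [topSum, this]
  · set s := l.insertionSort (· ≥ ·) with hs
    have hperm : List.Perm s l := l.perm_insertionSort (· ≥ ·)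
    have hlen : s.length = l.length := hperm.length_eq
    have hsort : List.Pairwise (· ≥ ·) s := List.pairwise_insertionSort (· ≥ ·) l
    have hB1 : B - 1 < s.length := by omega
    set t := s[B-1] with htdef
    have htmem : t ∈ l := hperm.mem_iff.1 (List.getElem_mem hB1)
    have ht01 : t ∈ Set.Icc (0:ℝ) 1 := hl t htmem
    refine ⟨t, ht01, ?_⟩
    -- elements of take B are ≥ t, elements of drop B are ≤ t
    have htake : ∀ x ∈ s.take B, t ≤ x := by
      intro x hx
      rcases List.mem_take_iff_getElem.1 hx with ⟨i, hi, rfl⟩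
      have hiB : i ≤ B - 1 := by omega
      have hilen : i < s.length := by omega
      rcases eq_or_lt_of_le hiB with h | h
      · simp [htdef, h]
      · exact hsort.rel_get_of_lt (a := ⟨i, hilen⟩) (b := ⟨B-1, hB1⟩) h
    have hdrop : ∀ x ∈ s.drop B, x ≤ t := by
      intro x hx
      have htin : t ∈ s.take B := by
        rw [List.mem_take_iff_getElem]
        exact ⟨B-1, by omega, rfl⟩
      exact hsort.rel_of_mem_take_of_mem_drop htin hx
    have hlentake : (s.take B).length = B := by
      rw [List.length_take]; omega
    have hsum_drop : ((s.drop B).map (fun x => max (x - t) 0)).sum = 0 := by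
      apply List.sum_eq_zero
      intro x hx
      obtain ⟨y, hy, rfl⟩ := List.mem_map.1 hx
      have := hdrop y hy
      simp [max_eq_right]; linarith
    have hsum_take : ((s.take B).map (fun x => max (x - t) 0)).sum
        = (s.take B).sum - (B : ℝ) * t := by
      have : ((s.take B).map (fun x => max (x - t) 0)).sum
          = ((s.take B).map (fun x => x + (-t))).sum := by
        congr 1
        apply List.map_congr_left
        intro x hx
        have := htake x hx
        rw [max_eq_left (by linarith)]; ring
      rw [this, list_sum_map_add (f := fun x => x) (g := fun _ => -t), List.map_id',
        list_sum_map_const, hlentake]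
      ring
    have hsplit : (l.map (fun x => max (x - t) 0)).sum
        = ((s.take B).map (fun x => max (x - t) 0)).sum := by
      rw [← (hperm.map (fun x => max (x - t) 0)).sum_eq]
      conv_lhs => rw [← List.take_append_drop B s]
      rw [List.map_append, List.sum_append, hsum_drop, add_zero]
    rw [hsplit, hsum_take]
    simp [topSum, hs]

lemma floor_div_tendsto (α : ℝ) (hα0 : 0 < α) :
    Tendsto (fun K : ℕ => (⌊α * K⌋₊ : ℝ) / K) atTop (nhds α) := by
  have h1 : Tendsto (fun K : ℕ => α - 1 / K) atTop (nhds α) := by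
    have := tendsto_one_div_atTop_nhds_zero_nat (𝕜 := ℝ)
    have := (tendsto_const_nhds (x := α) (f := atTop (α := ℕ))).sub this
    simpa using this
  apply tendsto_of_tendsto_of_tendsto_of_le_of_le' h1 tendsto_const_nhds
  · filter_upwards [eventually_ge_atTop 1] with K hK
    have hKpos : (0:ℝ) < K := by exact_mod_cast hK
    rw [sub_le_iff_le_add, ← add_div, le_div_iff₀ hKpos]
    have h2 : α * K < ⌊α * K⌋₊ + 1 := Nat.lt_floor_add_one _
    linarith
  · filter_upwards [eventually_ge_atTop 1] with K hK
    have hKpos : (0:ℝ) < K := by exact_mod_cast hK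
    rw [div_le_iff₀ hKpos]
    have := Nat.floor_le (a := α * K) (by positivity)
    linarith [this]

lemma exists_net (n : ℕ) (hn : 1 ≤ n) {t : ℝ} (ht : t ∈ Set.Icc (0:ℝ) 1) :
    ∃ j ≤ n, |t - (j:ℝ)/n| ≤ 1/n := by
  refine ⟨⌊t * n⌋₊, ?_, ?_⟩
  · apply Nat.floor_le_of_le
    nlinarith [ht.1, ht.2, (by exact_mod_cast hn : (1:ℝ) ≤ n)]
  · have hnpos : (0:ℝ) < n := by exact_mod_cast hn
    have h1 : (⌊t * n⌋₊ : ℝ) ≤ t * n := Nat.floor_le (by nlinarith [ht.1])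
    have h2 : t * n < ⌊t * n⌋₊ + 1 := Nat.lt_floor_add_one _
    rw [abs_le]
    constructor
    · have he : -(1 / (n:ℝ)) ≤ 0 := neg_nonpos.2 (by positivity)
      have : 0 ≤ t - (⌊t * n⌋₊:ℝ)/n := by
        rw [sub_nonneg, div_le_iff₀ hnpos]; linarith
      linarith
    · rw [sub_le_iff_le_add, ← add_div, le_div_iff₀ hnpos]
      linarith

noncomputable def QF (ν : Measure ℝ) : ℝ → ℝ := fun u => sInf {x | u ≤ cdf ν x}

section Quantile
variable (ν : Measure ℝ) [IsProbabilityMeasure ν]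
  (hsupp : cdf ν 1 = 1) (hneg : ∀ x < (0:ℝ), cdf ν x = 0)
include hsupp hneg

lemma S_nonempty {u : ℝ} (hu : u ≤ 1) : (1:ℝ) ∈ {x | u ≤ cdf ν x} := by
  simp only [mem_setOf_eq, hsupp]; exact hu

lemma S_subset {u : ℝ} (hu : 0 < u) : {x | u ≤ cdf ν x} ⊆ Ici 0 := by
  intro x hx
  by_contra h
  simp only [mem_Ici, not_le] at h
  have := hneg x h
  simp only [mem_setOf_eq, this] at hx
  linarith

lemma S_bddBelow {u : ℝ} (hu : 0 < u) : BddBelow {x | u ≤ cdf ν x} :=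
  ⟨0, fun x hx => S_subset ν hsupp hneg hu hx⟩

lemma QF_mem_Icc {u : ℝ} (hu : u ∈ Ioc (0:ℝ) 1) : QF ν u ∈ Icc (0:ℝ) 1 := by
  constructor
  · exact le_csInf ⟨1, S_nonempty ν hsupp hneg hu.2⟩ (fun x hx => S_subset ν hsupp hneg hu.1 hx)
  · exact csInf_le (S_bddBelow ν hsupp hneg hu.1) (S_nonempty ν hsupp hneg hu.2)

lemma le_cdf_QF {u : ℝ} (hu : u ∈ Ioc (0:ℝ) 1) : u ≤ cdf ν (QF ν u) := by
  set a := QF ν u with ha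
  have key : ∀ x ∈ Ioi a, u ≤ cdf ν x := by
    intro x hx
    obtain ⟨s, hs, hsx⟩ := exists_lt_of_csInf_lt ⟨1, S_nonempty ν hsupp hneg hu.2⟩ hx
    exact le_trans hs ((cdf ν).mono hsx.le)
  have hcont : Tendsto (cdf ν) (nhdsWithin a (Ioi a)) (nhds (cdf ν a)) :=
    ((cdf ν).right_continuous a).tendsto.mono_left (nhdsWithin_mono _ Ioi_subset_Ici_self)
  exact ge_of_tendsto hcont (eventually_nhdsWithin_of_forall key)

lemma QF_galois {u : ℝ} (hu : u ∈ Ioc (0:ℝ) 1) (x : ℝ) :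
    QF ν u ≤ x ↔ u ≤ cdf ν x := by
  constructor
  · intro h
    exact (le_cdf_QF ν hsupp hneg hu).trans ((cdf ν).mono h)
  · intro h
    exact csInf_le (S_bddBelow ν hsupp hneg hu.1) h

lemma QF_mono_Iic : MonotoneOn (QF ν) (Iic (1:ℝ)) := by
  intro u hu v hv huv
  rcases le_or_gt u 0 with h | h
  · rcases le_or_gt v 0 with h' | h'
    · have : ∀ w : ℝ, w ≤ 0 → QF ν w = 0 := by
        intro w hw
        have : {x | w ≤ cdf ν x} = univ := by
          ext x; simp only [mem_setOf_eq, mem_univ, iff_true]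
          exact hw.trans (cdf_nonneg ν x)
        rw [QF, this, Real.sInf_of_not_bddBelow not_bddBelow_univ]
      rw [this u h, this v h']
    · have hQ0 : QF ν u = 0 := by
        have : {x | u ≤ cdf ν x} = univ := by
          ext x; simp only [mem_setOf_eq, mem_univ, iff_true]
          exact h.trans (cdf_nonneg ν x)
        rw [QF, this, Real.sInf_of_not_bddBelow not_bddBelow_univ]
      rw [hQ0]
      exact (QF_mem_Icc ν hsupp hneg ⟨h', hv⟩).1
  · apply csInf_le_csInf (S_bddBelow ν hsupp hneg h) ⟨1, S_nonempty ν hsupp hneg hv⟩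
    intro x hx
    exact le_trans huv hx

lemma QF_eq_zero_gt_one {u : ℝ} (hu : 1 < u) : QF ν u = 0 := by
  have : {x | u ≤ cdf ν x} = ∅ := by
    ext x; simp only [mem_setOf_eq, mem_empty_iff_false, iff_false, not_le]
    exact lt_of_le_of_lt (cdf_le_one ν x) hu
  rw [QF, this, Real.sInf_empty]

lemma QF_measurable : Measurable (QF ν) := by
  have h1 : Monotone (fun u => QF ν (min u 1)) := by
    intro u v huv
    exact QF_mono_Iic ν hsupp hneg (min_le_right u 1) (min_le_right v 1)
      (min_le_min huv le_rfl)
  have h2 : QF ν = fun u => if u ≤ 1 then QF ν (min u 1) else 0 := by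
    funext u
    split_ifs with h
    · rw [min_eq_left h]
    · exact QF_eq_zero_gt_one ν hsupp hneg (not_le.1 h)
  rw [h2]
  exact Measurable.ite measurableSet_Iic (h1.measurable) measurable_const

lemma QF_law : Measure.map (QF ν) (volume.restrict (Ioo (0:ℝ) 1)) = ν := by
  have hfin : IsFiniteMeasure (volume.restrict (Ioo (0:ℝ) 1)) := by
    constructor
    rw [Measure.restrict_apply_univ, Real.volume_Ioo]
    norm_num
  have hQm := QF_measurable ν hsupp hneg
  have hmapfin : IsFiniteMeasure (Measure.map (QF ν) (volume.restrict (Ioo (0:ℝ) 1))) := by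
    constructor
    rw [Measure.map_apply hQm MeasurableSet.univ]
    simp only [preimage_univ]
    rw [Measure.restrict_apply_univ, Real.volume_Ioo]; norm_num
  refine @MeasureTheory.Measure.ext_of_Iic ℝ _ _ _ _ _ _ _ _ hmapfin ?_
  intro x
  set c := cdf ν x with hc
  have hc01 : c ∈ Icc (0:ℝ) 1 := ⟨cdf_nonneg ν x, cdf_le_one ν x⟩
  have hνx : ν (Iic x) = ENNReal.ofReal c := by
    rw [hc, cdf_eq_real, measureReal_def, ENNReal.ofReal_toReal (measure_ne_top ν _)]
  rw [Measure.map_apply hQm measurableSet_Iic, Measure.restrict_apply (hQm measurableSet_Iic),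
    hνx]
  have hset : QF ν ⁻¹' Iic x ∩ Ioo 0 1 = Iic c ∩ Ioo 0 1 := by
    ext u
    simp only [mem_inter_iff, mem_preimage, mem_Iic, mem_Ioo, and_congr_left_iff]
    intro hu
    exact QF_galois ν hsupp hneg ⟨hu.1, hu.2.le⟩ x
  rw [hset]
  rcases lt_or_eq_of_le hc01.2 with h | h
  · have : Iic c ∩ Ioo (0:ℝ) 1 = Ioc 0 c := by
      ext u
      simp only [mem_inter_iff, mem_Iic, mem_Ioo, mem_Ioc]
      constructor
      · rintro ⟨h1, h2, h3⟩; exact ⟨h2, h1⟩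
      · rintro ⟨h1, h2⟩; exact ⟨h2, h1, lt_of_le_of_lt h2 h⟩
    rw [this, Real.volume_Ioc, sub_zero]
  · have : Iic c ∩ Ioo (0:ℝ) 1 = Ioo 0 1 := by
      apply inter_eq_self_of_subset_right
      intro u hu
      rw [mem_Iic, h]
      exact hu.2.le
    rw [this, Real.volume_Ioo, h]
    norm_num

end Quantile

lemma QF_global_Icc (ν : Measure ℝ) [IsProbabilityMeasure ν]
    (hsupp : cdf ν 1 = 1) (hneg : ∀ x < (0:ℝ), cdf ν x = 0) (u : ℝ) :
    QF ν u ∈ Icc (0:ℝ) 1 := by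
  rcases le_or_gt u 0 with h | h
  · have : {x | u ≤ cdf ν x} = univ := by
      ext x; simp only [mem_setOf_eq, mem_univ, iff_true]
      exact h.trans (cdf_nonneg ν x)
    rw [QF, this, Real.sInf_of_not_bddBelow not_bddBelow_univ]
    norm_num
  · rcases le_or_gt u 1 with h' | h'
    · exact QF_mem_Icc ν hsupp hneg ⟨h, h'⟩
    · rw [QF_eq_zero_gt_one ν hsupp hneg h']
      norm_num

section CVaR
variable (ν : Measure ℝ) [IsProbabilityMeasure ν]
  (hsupp : cdf ν 1 = 1) (hneg : ∀ x < (0:ℝ), cdf ν x = 0)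
include hsupp hneg

lemma integrableOn_QF_aux (t : ℝ) (s : Set ℝ) (hvol : volume s ≠ ⊤) :
    IntegrableOn (fun u => max (QF ν u - t) 0) s := by
  have hfin : IsFiniteMeasure (volume.restrict s) := ⟨by
    rw [Measure.restrict_apply_univ]; exact hvol.lt_top⟩
  apply Integrable.mono' (integrable_const (1 + |t|))
  · exact (((QF_measurable ν hsupp hneg).sub measurable_const).max
      measurable_const).aestronglyMeasurable
  · apply ae_of_all
    intro u
    have h01 := QF_global_Icc ν hsupp hneg u
    rw [Real.norm_eq_abs]
    rcases le_total (QF ν u - t) 0 with h | h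
    · rw [max_eq_right h]
      simp only [abs_zero]
      positivity
    · rw [max_eq_left h, abs_of_nonneg h]
      have := abs_nonneg t
      have := neg_abs_le t
      have := h01.2
      linarith

lemma integrableOn_QF (s : Set ℝ) (hvol : volume s ≠ ⊤) :
    IntegrableOn (QF ν) s := by
  have h := integrableOn_QF_aux ν hsupp hneg 0 s hvol
  have he : (fun u => max (QF ν u - 0) 0) = QF ν := by
    funext u
    rw [sub_zero, max_eq_left (QF_global_Icc ν hsupp hneg u).1]
  rwa [he] at h

lemma integral_posPart_transfer (t : ℝ) :
    ∫ y, max (y - t) 0 ∂ν = ∫ u in Ioo (0:ℝ) 1, max (QF ν u - t) 0 := by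
  conv_lhs => rw [← QF_law ν hsupp hneg]
  rw [integral_map (QF_measurable ν hsupp hneg).aemeasurable
    (Continuous.aestronglyMeasurable (by continuity))]

lemma cvar_eq (α : ℝ) (hα0 : 0 < α) (hα1 : α < 1) :
    α * QF ν (1 - α) + ∫ y, max (y - (QF ν (1-α))) 0 ∂ν
      = ∫ u in Ioo (1-α) 1, QF ν u := by
  set t₀ := QF ν (1-α) with ht₀
  have hmem : (1-α : ℝ) ∈ Ioc (0:ℝ) 1 := ⟨by linarith, by linarith⟩
  rw [integral_posPart_transfer ν hsupp hneg]
  have hunion : Ioo (0:ℝ) 1 = Ioc 0 (1-α) ∪ Ioo (1-α) 1 := by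
    ext u
    simp only [mem_Ioo, mem_union, mem_Ioc]
    constructor
    · rintro ⟨h1, h2⟩
      rcases le_or_gt u (1-α) with h | h
      · exact Or.inl ⟨h1, h⟩
      · exact Or.inr ⟨h, h2⟩
    · rintro (⟨h1, h2⟩ | ⟨h1, h2⟩)
      · exact ⟨h1, by linarith⟩
      · exact ⟨by linarith, h2⟩
  have hdisj : Disjoint (Ioc (0:ℝ) (1-α)) (Ioo (1-α) 1) := by
    apply Set.disjoint_left.2
    rintro u ⟨_, h2⟩ ⟨h3, _⟩
    linarith
  have hvol1 : volume (Ioc (0:ℝ) (1-α)) ≠ ⊤ := by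
    rw [Real.volume_Ioc]; exact ENNReal.ofReal_ne_top
  have hvol2 : volume (Ioo (1-α : ℝ) 1) ≠ ⊤ := by
    rw [Real.volume_Ioo]; exact ENNReal.ofReal_ne_top
  rw [hunion, setIntegral_union hdisj measurableSet_Ioo
    (integrableOn_QF_aux ν hsupp hneg t₀ _ hvol1)
    (integrableOn_QF_aux ν hsupp hneg t₀ _ hvol2)]
  have hzero : ∫ u in Ioc (0:ℝ) (1-α), max (QF ν u - t₀) 0 = 0 := by
    rw [setIntegral_congr_fun measurableSet_Ioc (g := fun _ => (0:ℝ))]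
    · exact integral_zero _ _
    · intro u hu
      have : QF ν u ≤ t₀ := QF_mono_Iic ν hsupp hneg
        (mem_Iic.2 (by rcases hu with ⟨_, h⟩; linarith)) (mem_Iic.2 hmem.2) hu.2
      simp only [max_eq_right (by linarith : QF ν u - t₀ ≤ 0)]
  have hlin : ∫ u in Ioo (1-α : ℝ) 1, max (QF ν u - t₀) 0
      = (∫ u in Ioo (1-α : ℝ) 1, QF ν u) - α * t₀ := by
    rw [setIntegral_congr_fun measurableSet_Ioo (g := fun u => QF ν u - t₀)]
    · rw [integral_sub (integrableOn_QF ν hsupp hneg _ hvol2) (integrable_const _),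
        setIntegral_const, Real.volume_real_Ioo_of_le (by linarith), smul_eq_mul]
      ring_nf
    · intro u hu
      have : t₀ ≤ QF ν u := QF_mono_Iic ν hsupp hneg (mem_Iic.2 hmem.2)
        (mem_Iic.2 hu.2.le) hu.1.le
      simp only [max_eq_left (by linarith : (0:ℝ) ≤ QF ν u - t₀)]
  rw [hzero, hlin]
  ring

lemma cvar_le (α : ℝ) (hα0 : 0 < α) (hα1 : α < 1) (t : ℝ) :
    (∫ u in Ioo (1-α) 1, QF ν u) ≤ α * t + ∫ y, max (y - t) 0 ∂ν := by
  set t₀ := QF ν (1-α) with ht₀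
  have hmem : (1-α : ℝ) ∈ Ioc (0:ℝ) 1 := ⟨by linarith, by linarith⟩
  rw [← cvar_eq ν hsupp hneg α hα0 hα1,
    integral_posPart_transfer ν hsupp hneg, integral_posPart_transfer ν hsupp hneg]
  have hvol : volume (Ioo (0:ℝ) 1) ≠ ⊤ := by
    rw [Real.volume_Ioo]; exact ENNReal.ofReal_ne_top
  -- key inequality: E t ≥ E t₀ + (t₀ - t) * α
  have hind : Integrable (fun u => (t₀ - t) * indicator (Ioo (1-α:ℝ) 1) (fun _ => (1:ℝ)) u)
      (volume.restrict (Ioo (0:ℝ) 1)) := by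
    have : IsFiniteMeasure (volume.restrict (Ioo (0:ℝ) 1)) := ⟨by
      rw [Measure.restrict_apply_univ]; exact hvol.lt_top⟩
    apply Integrable.mono' (integrable_const |t₀ - t|)
    · exact (measurable_const.mul
        ((measurable_const (a := (1:ℝ))).indicator measurableSet_Ioo)).aestronglyMeasurable
    · apply ae_of_all
      intro u
      rw [Real.norm_eq_abs, abs_mul]
      rcases Set.indicator_eq_zero_or_self (Ioo (1-α:ℝ) 1) (fun _ => (1:ℝ)) u with h | h
      · rw [h]; simp [abs_nonneg]
      · rw [h]; simp
  have hkey : ∫ u in Ioo (0:ℝ) 1, (max (QF ν u - t₀) 0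
        + (t₀ - t) * indicator (Ioo (1-α:ℝ) 1) (fun _ => (1:ℝ)) u)
      ≤ ∫ u in Ioo (0:ℝ) 1, max (QF ν u - t) 0 := by
    apply setIntegral_mono_on
    · exact (integrableOn_QF_aux ν hsupp hneg t₀ _ hvol).add hind
    · exact integrableOn_QF_aux ν hsupp hneg t _ hvol
    · exact measurableSet_Ioo
    · intro u hu
      rcases le_or_gt u (1-α) with h | h
      · have h1 : QF ν u ≤ t₀ := QF_mono_Iic ν hsupp hneg
          (mem_Iic.2 (by linarith)) (mem_Iic.2 hmem.2) h
        rw [indicator_of_notMem (by simp [mem_Ioo]; intro hc; linarith)]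
        rw [max_eq_right (by linarith : QF ν u - t₀ ≤ 0)]
        simp only [mul_zero, add_zero]
        exact le_max_right _ _
      · have h1 : t₀ ≤ QF ν u := QF_mono_Iic ν hsupp hneg (mem_Iic.2 hmem.2)
          (mem_Iic.2 hu.2.le) h.le
        rw [indicator_of_mem (by exact ⟨h, hu.2⟩), mul_one,
          max_eq_left (by linarith : (0:ℝ) ≤ QF ν u - t₀)]
        have : QF ν u - t ≤ max (QF ν u - t) 0 := le_max_left _ _
        linarith
  have hsplit : ∫ u in Ioo (0:ℝ) 1, (max (QF ν u - t₀) 0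
        + (t₀ - t) * indicator (Ioo (1-α:ℝ) 1) (fun _ => (1:ℝ)) u)
      = (∫ u in Ioo (0:ℝ) 1, max (QF ν u - t₀) 0) + (t₀ - t) * α := by
    rw [integral_add (integrableOn_QF_aux ν hsupp hneg t₀ _ hvol) hind]
    congr 1
    rw [integral_const_mul, setIntegral_indicator measurableSet_Ioo]
    have hint : Ioo (0:ℝ) 1 ∩ Ioo (1-α) 1 = Ioo (1-α) 1 := by
      apply inter_eq_self_of_subset_right
      intro u hu
      exact ⟨by rcases hu with ⟨h1, _⟩; linarith, hu.2⟩
    rw [hint, setIntegral_const, Real.volume_real_Ioo_of_le (by linarith), smul_eq_mul, mul_one]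
    ring_nf
  rw [hsplit] at hkey
  linarith

end CVaR
lemma deterministic_limit (α : ℝ) (hα0 : 0 < α) (hα1 : α < 1)
    (x : ℕ → ℝ) (hx : ∀ i, x i ∈ Set.Icc (0:ℝ) 1)
    (g : ℝ → ℝ)
    (hgconv : ∀ q : ℚ, Tendsto (fun K : ℕ => (⌊α*(K:ℝ)⌋₊:ℝ)/K * (q:ℝ) +
        ((List.ofFn fun i : Fin K => x i).map (fun y => max (y - (q:ℝ)) 0)).sum / K)
      atTop (nhds (g q)))
    (L : ℝ) (hgL : ∀ t : ℝ, L ≤ g t)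
    (t₀ : ℝ) (ht₀ : t₀ ∈ Set.Icc (0:ℝ) 1) (hgt₀ : g t₀ = L)
    (hgLip : ∀ s t : ℝ, g s ≤ g t + 2 * |s - t|) :
    Tendsto (fun K : ℕ => (1/(K:ℝ)) * topSum ⌊α*(K:ℝ)⌋₊ (List.ofFn fun i : Fin K => x i))
      atTop (nhds L) := by
  classical
  set lst : ℕ → List ℝ := fun K => List.ofFn fun i : Fin K => x i with hlst
  set SK : ℝ → ℕ → ℝ := fun t K => ((lst K).map (fun y => max (y - t) 0)).sum with hSK
  set hK : ℝ → ℕ → ℝ := fun t K => (⌊α*(K:ℝ)⌋₊:ℝ)/K * t + SK t K / K with hhK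
  have hlen : ∀ K, (lst K).length = K := by intro K; simp [hlst]
  have hmem : ∀ K, ∀ y ∈ lst K, y ∈ Set.Icc (0:ℝ) 1 := by
    intro K y hy
    obtain ⟨i, rfl⟩ := List.mem_ofFn.1 hy
    exact hx i
  have hBle : ∀ K : ℕ, ⌊α*(K:ℝ)⌋₊ ≤ K := by
    intro K
    calc ⌊α*(K:ℝ)⌋₊ ≤ ⌊(K:ℝ)⌋₊ := Nat.floor_mono (by nlinarith [Nat.cast_nonneg (α := ℝ) K])
      _ = K := Nat.floor_natCast K
  have hup : ∀ K : ℕ, 1 ≤ K → ∀ t : ℝ, 0 ≤ t →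
      (1/(K:ℝ)) * topSum ⌊α*(K:ℝ)⌋₊ (lst K) ≤ hK t K := by
    intro K hK1 t ht
    have hKpos : (0:ℝ) < K := by exact_mod_cast hK1
    have h1 := topSum_le ⌊α*(K:ℝ)⌋₊ (lst K) t ht
    have h2 := mul_le_mul_of_nonneg_left h1 (by positivity : (0:ℝ) ≤ 1/(K:ℝ))
    have h3 : (1/(K:ℝ)) * ((⌊α*(K:ℝ)⌋₊:ℝ) * t + SK t K)
        = (⌊α*(K:ℝ)⌋₊:ℝ)/K * t + SK t K / K := by ring
    rw [h3] at h2
    exact h2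
  have hlow : ∀ K : ℕ, 1 ≤ K → ∃ t ∈ Set.Icc (0:ℝ) 1,
      hK t K ≤ (1/(K:ℝ)) * topSum ⌊α*(K:ℝ)⌋₊ (lst K) := by
    intro K hK1
    have hKpos : (0:ℝ) < K := by exact_mod_cast hK1
    obtain ⟨t, ht01, hle⟩ := exists_topSum_ge ⌊α*(K:ℝ)⌋₊ (lst K)
      (by rw [hlen]; exact hBle K) (hmem K)
    refine ⟨t, ht01, ?_⟩
    have h2 := mul_le_mul_of_nonneg_left hle (by positivity : (0:ℝ) ≤ 1/(K:ℝ))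
    have h3 : (1/(K:ℝ)) * ((⌊α*(K:ℝ)⌋₊:ℝ) * t + SK t K)
        = (⌊α*(K:ℝ)⌋₊:ℝ)/K * t + SK t K / K := by ring
    rw [h3] at h2
    exact h2
  have hlip : ∀ K : ℕ, 1 ≤ K → ∀ s t : ℝ, |hK s K - hK t K| ≤ 2 * |s - t| := by
    intro K hK1 s t
    have hKpos : (0:ℝ) < K := by exact_mod_cast hK1
    have h1 : |SK s K - SK t K| ≤ K * |s - t| := by
      have := list_abs_sum_sub (lst K) s t
      rwa [hlen] at this
    have hB1 : (⌊α*(K:ℝ)⌋₊:ℝ)/K ≤ 1 := by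
      rw [div_le_one hKpos]
      exact_mod_cast hBle K
    have hB0 : (0:ℝ) ≤ (⌊α*(K:ℝ)⌋₊:ℝ)/K := by positivity
    have he : hK s K - hK t K
        = (⌊α*(K:ℝ)⌋₊:ℝ)/K * (s - t) + (SK s K - SK t K) / K := by
      simp only [hhK]; ring
    rw [he]
    calc |(⌊α*(K:ℝ)⌋₊:ℝ)/K * (s - t) + (SK s K - SK t K) / K|
        ≤ |(⌊α*(K:ℝ)⌋₊:ℝ)/K * (s - t)| + |(SK s K - SK t K) / K| := abs_add_le _ _
      _ = (⌊α*(K:ℝ)⌋₊:ℝ)/K * |s - t| + |SK s K - SK t K| / K := by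
          rw [abs_mul, abs_of_nonneg hB0, abs_div, abs_of_nonneg hKpos.le]
      _ ≤ 1 * |s - t| + (K * |s - t|) / K := by gcongr
      _ = 2 * |s - t| := by field_simp; ring
  rw [Metric.tendsto_nhds]
  intro ε hε
  obtain ⟨n', hn'⟩ := exists_nat_one_div_lt (by linarith : (0:ℝ) < ε/8)
  set n := n' + 1 with hn
  have hn1 : 1 ≤ n := Nat.le_add_left 1 n'
  have hnpos : (0:ℝ) < n := by exact_mod_cast hn1
  set δ := 1/(n:ℝ) with hδdef
  have hδpos : 0 < δ := by positivity
  have hδ : δ < ε/8 := by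
    have : ((n':ℝ) + 1) = (n:ℝ) := by push_cast [hn]; ring
    rwa [hδdef, ← this]
  -- eventually all net points are δ-close
  have hev1 : ∀ᶠ K in atTop, ∀ j ∈ Finset.range (n+1),
      |hK ((j:ℝ)/n) K - g ((j:ℝ)/n)| < δ := by
    rw [eventually_all_finset]
    intro j _
    have hq : (((j:ℚ)/(n:ℚ) : ℚ) : ℝ) = (j:ℝ)/n := by push_cast; ring
    have := hgconv ((j:ℚ)/(n:ℚ))
    rw [hq] at this
    have h2 := Metric.tendsto_atTop.1 this δ hδpos
    obtain ⟨N, hN⟩ := h2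
    rw [eventually_atTop]
    exact ⟨N, fun K hKN => by
      have := hN K hKN
      rwa [Real.dist_eq] at this⟩
  filter_upwards [hev1, eventually_ge_atTop 1] with K hnet hK1
  rw [Real.dist_eq]
  have hKpos : (0:ℝ) < K := by exact_mod_cast hK1
  set A := (1/(K:ℝ)) * topSum ⌊α*(K:ℝ)⌋₊ (lst K) with hA
  -- upper bound
  obtain ⟨j₁, hj₁n, hj₁⟩ := exists_net n hn1 ht₀
  have hq₁mem : j₁ ∈ Finset.range (n+1) := Finset.mem_range.2 (by omega)
  have hq₁pos : (0:ℝ) ≤ (j₁:ℝ)/n := by positivity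
  have hupper : A ≤ L + 3*δ := by
    have h1 : A ≤ hK ((j₁:ℝ)/n) K := hup K hK1 _ hq₁pos
    have h2 : hK ((j₁:ℝ)/n) K < g ((j₁:ℝ)/n) + δ := by
      have := hnet j₁ hq₁mem
      rw [abs_sub_lt_iff] at this
      linarith [this.1]
    have h3 : g ((j₁:ℝ)/n) ≤ g t₀ + 2 * |(j₁:ℝ)/n - t₀| := hgLip _ _
    have h4 : |(j₁:ℝ)/n - t₀| ≤ δ := by
      rw [abs_sub_comm]
      exact hj₁
    rw [hgt₀] at h3
    linarith
  -- lower bound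
  have hlower : L - 3*δ ≤ A := by
    obtain ⟨tK, htK01, hlowK⟩ := hlow K hK1
    obtain ⟨j₂, hj₂n, hj₂⟩ := exists_net n hn1 htK01
    have hq₂mem : j₂ ∈ Finset.range (n+1) := Finset.mem_range.2 (by omega)
    have h1 : |hK tK K - hK ((j₂:ℝ)/n) K| ≤ 2*δ := by
      calc |hK tK K - hK ((j₂:ℝ)/n) K| ≤ 2 * |tK - (j₂:ℝ)/n| := hlip K hK1 _ _
        _ ≤ 2*δ := by linarith [hj₂]
    have h2 : |hK ((j₂:ℝ)/n) K - g ((j₂:ℝ)/n)| < δ := hnet j₂ hq₂mem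
    have h3 : L ≤ g ((j₂:ℝ)/n) := hgL _
    rw [abs_sub_le_iff] at h1
    rw [abs_sub_lt_iff] at h2
    linarith [hlowK, h1.2, h2.2]
  rw [abs_sub_lt_iff]
  constructor <;> linarith

/-- for i.i.d. `η₁,η₂,…` with values in `[0,1]` and continuous
distribution, with `B = ⌊αK⌋`, the normalized top-`B` sum `(1/K)Σ_{ℓ≤B} η₍ℓ₎`
converges almost surely (hence in probability) to `∫_{1−α}^1 Q(u) du`, where `Q`
is the quantile function. -/
theorem top_sum_quantile_limit
    {Ω : Type*} [MeasurableSpace Ω] (μ : Measure Ω) [IsProbabilityMeasure μ]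
    (η : ℕ → Ω → ℝ) (hmeas : ∀ i, Measurable (η i))
    (hindep : iIndepFun η μ)
    (hident : ∀ i, IdentDistrib (η i) (η 0) μ μ)
    (hrange : ∀ i ω, η i ω ∈ Set.Icc (0 : ℝ) 1)
    (hcont : ∀ x : ℝ, μ {ω | η 0 ω = x} = 0)
    (Q : ℝ → ℝ) (hQ : Q = fun u => sInf {x : ℝ | u ≤ (μ {ω | η 0 ω ≤ x}).toReal})
    (α : ℝ) (hα0 : 0 < α) (hα1 : α < 1) :
    ∀ᵐ ω ∂μ, Tendsto
      (fun (K : ℕ) => (1 / (K : ℝ)) *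
        topSum (Nat.floor (α * (K : ℝ))) (List.ofFn fun i : Fin K => η i ω))
      atTop (nhds (∫ u in Set.Ioo (1 - α) 1, Q u)) := by
  classical
  have hη0meas := hmeas 0
  set ν : Measure ℝ := Measure.map (η 0) μ with hν
  have hpm : IsProbabilityMeasure ν := Measure.isProbabilityMeasure_map hη0meas.aemeasurable
  have hcdf : ∀ x : ℝ, cdf ν x = (μ {ω | η 0 ω ≤ x}).toReal := by
    intro x
    rw [cdf_eq_real ν x, measureReal_def, hν, Measure.map_apply hη0meas measurableSet_Iic]
    rfl
  have hQeq : Q = QF ν := by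
    rw [hQ]; funext u; rw [QF]
    congr 1; ext x
    simp only [mem_setOf_eq, hcdf x]
  have hsupp : cdf ν 1 = 1 := by
    rw [hcdf]
    have h1 : {ω | η 0 ω ≤ 1} = Set.univ := by
      ext ω; simp [(hrange 0 ω).2]
    rw [h1, measure_univ, ENNReal.toReal_one]
  have hneg : ∀ x < (0:ℝ), cdf ν x = 0 := by
    intro x hx
    rw [hcdf]
    have h1 : {ω | η 0 ω ≤ x} = ∅ := by
      ext ω
      simp only [mem_setOf_eq, mem_empty_iff_false, iff_false, not_le]
      exact lt_of_lt_of_le hx (hrange 0 ω).1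
    rw [h1, measure_empty, ENNReal.toReal_zero]
  have hIntμ : ∀ t : ℝ, Integrable (fun ω => max (η 0 ω - t) 0) μ := by
    intro t
    apply Integrable.mono' (integrable_const (1 + |t|))
    · exact ((hη0meas.sub measurable_const).max measurable_const).aestronglyMeasurable
    · apply ae_of_all
      intro ω
      have h01 := hrange 0 ω
      rw [Real.norm_eq_abs]
      rcases le_total (η 0 ω - t) 0 with h | h
      · rw [max_eq_right h, abs_zero]; positivity
      · rw [max_eq_left h, abs_of_nonneg h]
        have := neg_abs_le t
        have := h01.2
        linarith
  have hE : ∀ t : ℝ, ∫ ω, max (η 0 ω - t) 0 ∂μ = ∫ y, max (y - t) 0 ∂ν := by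
    intro t
    rw [hν, integral_map hη0meas.aemeasurable
      (Continuous.aestronglyMeasurable (by continuity))]
  set g : ℝ → ℝ := fun t => α * t + ∫ ω, max (η 0 ω - t) 0 ∂μ with hg
  set L : ℝ := ∫ u in Set.Ioo (1-α) 1, QF ν u with hL
  have hLgoal : (∫ u in Set.Ioo (1-α) 1, Q u) = L := by rw [hQeq, hL]
  set t₀ := QF ν (1-α) with ht₀def
  have hmemα : (1-α:ℝ) ∈ Set.Ioc (0:ℝ) 1 := ⟨by linarith, by linarith⟩
  have ht₀ : t₀ ∈ Set.Icc (0:ℝ) 1 := QF_mem_Icc ν hsupp hneg hmemα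
  have hgt₀ : g t₀ = L := by
    simp only [hg, hL, ht₀def]
    rw [hE]
    exact cvar_eq ν hsupp hneg α hα0 hα1
  have hgL : ∀ t : ℝ, L ≤ g t := by
    intro t
    simp only [hg, hL]
    rw [hE]
    exact cvar_le ν hsupp hneg α hα0 hα1 t
  have hgLip : ∀ s t : ℝ, g s ≤ g t + 2*|s-t| := by
    intro s t
    have h1 : α * s ≤ α * t + |s - t| := by
      nlinarith [le_abs_self (s-t), abs_nonneg (s-t)]
    have h2 : ∫ ω, max (η 0 ω - s) 0 ∂μ
        ≤ (∫ ω, max (η 0 ω - t) 0 ∂μ) + |s - t| := by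
      have h3 : ∫ ω, max (η 0 ω - s) 0 ∂μ ≤ ∫ ω, (max (η 0 ω - t) 0 + |s - t|) ∂μ :=
        integral_mono (hIntμ s) ((hIntμ t).add (integrable_const |s - t|))
          (fun ω => posPart_le (η 0 ω) s t)
      rwa [integral_add (hIntμ t) (integrable_const _), integral_const, probReal_univ,
        one_smul] at h3
    simp only [hg]
    have := abs_nonneg (s - t)
    linarith
  have hSLLN : ∀ q : ℚ, ∀ᵐ ω ∂μ, Tendsto
      (fun K : ℕ => (∑ i ∈ Finset.range K, max (η i ω - (q:ℝ)) 0) / K) atTop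
      (nhds (∫ ω, max (η 0 ω - (q:ℝ)) 0 ∂μ)) := by
    intro q
    have hmg : Measurable (fun y : ℝ => max (y - (q:ℝ)) 0) :=
      (measurable_id.sub measurable_const).max measurable_const
    exact strong_law_ae_real _ (hIntμ q)
      (fun i j hij => (hindep.comp (fun _ => fun y => max (y - (q:ℝ)) 0)
        (fun _ => hmg)).indepFun hij)
      (fun i => (hident i).comp hmg)
  have hae : ∀ᵐ ω ∂μ, ∀ q : ℚ, Tendsto
      (fun K : ℕ => (∑ i ∈ Finset.range K, max (η i ω - (q:ℝ)) 0) / K) atTop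
      (nhds (∫ ω, max (η 0 ω - (q:ℝ)) 0 ∂μ)) := ae_all_iff.2 hSLLN
  filter_upwards [hae] with ω hω
  rw [hLgoal]
  apply deterministic_limit α hα0 hα1 (fun i => η i ω) (fun i => hrange i ω) g _ L hgL
    t₀ ht₀ hgt₀ hgLip
  intro q
  have h1 := hω q
  have h2 : (fun K : ℕ => (∑ i ∈ Finset.range K, max (η i ω - (q:ℝ)) 0) / K)
      = fun K : ℕ => ((List.ofFn fun i : Fin K => η i ω).map
          (fun y => max (y - (q:ℝ)) 0)).sum / K := by
    funext K
    simp only [List.map_ofFn, List.sum_ofFn, Function.comp]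
    rw [Fin.sum_univ_eq_sum_range (fun m => max (η m ω - (q:ℝ)) 0) K]
  rw [h2] at h1
  have h3 := ((floor_div_tendsto α hα0).mul_const (q:ℝ)).add h1
  simpa only [hg] using h3
end
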